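/- Let W be a real n×n matrix, P a positive definite diagonal matrix, and g > 0, such that g²WᵀPW - P ≺ 0. Then the 2-norm of P^{1/2} W P^{-1/2} is strictly less than 1/g; consequently, for any diagonal D with 0 ⪯ D ⪯ gI, the matrix measure μ₂ of -I + P^{1/2}WP^{-1/2}D is negative. -/

import Mathlib

open Matrix

/-- `X ≺ 0`: negative definiteness of a real matrix (`xᵀXx < 0` for all nonzero `x`). -/
def NegDef {n : ℕ} (X : Matrix (Fin n) (Fin n) ℝ) : Prop :=
  ∀ x : Fin n → ℝ, x ≠ 0 → x ⬝ᵥ X.mulVec x < 0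

/-- The Euclidean norm of a vector. -/
noncomputable def eNorm {n : ℕ} (x : Fin n → ℝ) : ℝ := Real.sqrt (∑ i, (x i) ^ 2)

lemma eNorm_nonneg {n : ℕ} (x : Fin n → ℝ) : 0 ≤ eNorm x := Real.sqrt_nonneg _

lemma eNorm_sq {n : ℕ} (x : Fin n → ℝ) : eNorm x ^ 2 = ∑ i, x i ^ 2 :=
  Real.sq_sqrt (Finset.sum_nonneg fun _ _ => sq_nonneg _)

lemma eNorm_zero {n : ℕ} : eNorm (0 : Fin n → ℝ) = 0 := by simp [eNorm]

lemma eNorm_eq_zero {n : ℕ} {x : Fin n → ℝ} (h : eNorm x = 0) : x = 0 := by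
  have h2 : ∑ i, x i ^ 2 = 0 := by
    have := congrArg (· ^ 2) h
    simpa [eNorm_sq] using this
  funext i
  have := (Finset.sum_eq_zero_iff_of_nonneg (fun i _ => sq_nonneg (x i))).mp h2 i
    (Finset.mem_univ i)
  exact pow_eq_zero_iff (two_ne_zero) |>.mp this

lemma eNorm_pos {n : ℕ} {x : Fin n → ℝ} (hx : x ≠ 0) : 0 < eNorm x :=
  lt_of_le_of_ne (eNorm_nonneg x) fun h => hx (eNorm_eq_zero h.symm)

lemma eNorm_smul {n : ℕ} (a : ℝ) (x : Fin n → ℝ) : eNorm (a • x) = |a| * eNorm x := by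
  unfold eNorm
  rw [← Real.sqrt_sq_eq_abs, ← Real.sqrt_mul (sq_nonneg a), Finset.mul_sum]
  congr 1
  refine Finset.sum_congr rfl fun i _ => ?_
  simp [mul_pow]

lemma eNorm_eq_norm {n : ℕ} (x : EuclideanSpace ℝ (Fin n)) : eNorm x = ‖x‖ := by
  rw [EuclideanSpace.norm_eq]
  simp [eNorm, Real.norm_eq_abs, sq_abs]

lemma dot_le_eNorm {n : ℕ} (x y : Fin n → ℝ) : x ⬝ᵥ y ≤ eNorm x * eNorm y := by
  set x' : EuclideanSpace ℝ (Fin n) := (WithLp.equiv 2 (Fin n → ℝ)).symm x with hx'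
  set y' : EuclideanSpace ℝ (Fin n) := (WithLp.equiv 2 (Fin n → ℝ)).symm y with hy'
  have h := real_inner_le_norm (F := EuclideanSpace ℝ (Fin n)) x' y'
  have h1 : inner (𝕜 := ℝ) x' y' = x ⬝ᵥ y := by
    simp [PiLp.inner_apply, RCLike.inner_apply, dotProduct, mul_comm, hx', hy',
      WithLp.equiv_symm_apply]
  have h2 : ‖x'‖ = eNorm x := by
    rw [← eNorm_eq_norm x']; rfl
  have h3 : ‖y'‖ = eNorm y := by
    rw [← eNorm_eq_norm y']; rfl
  rw [h1, h2, h3] at h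
  exact h

lemma isDiag_mulVec {n : ℕ} {D : Matrix (Fin n) (Fin n) ℝ} (hD : D.IsDiag)
    (x : Fin n → ℝ) : D.mulVec x = fun i => D i i * x i := by
  funext i
  show ∑ j, D i j * x j = _
  refine Finset.sum_eq_single i (fun j _ hj => ?_) (by simp)
  rw [hD (Ne.symm hj), zero_mul]

theorem stmt12 {n : ℕ} (W : Matrix (Fin n) (Fin n) ℝ) (p : Fin n → ℝ) (g : ℝ)
    (hg : 0 < g) (hp : ∀ i, 0 < p i)
    (hcond : NegDef (g ^ 2 • (Wᵀ * Matrix.diagonal p * W) - Matrix.diagonal p)) :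
    (∃ c : ℝ, c < 1 / g ∧ ∀ x : Fin n → ℝ,
        eNorm ((Matrix.diagonal (fun i => Real.sqrt (p i)) * W *
          Matrix.diagonal (fun i => (Real.sqrt (p i))⁻¹)).mulVec x) ≤ c * eNorm x) ∧
    ∀ D : Matrix (Fin n) (Fin n) ℝ, D.IsDiag → (∀ i, 0 ≤ D i i ∧ D i i ≤ g) →
      NegDef ((1/2 : ℝ) •
        (let A := -1 + Matrix.diagonal (fun i => Real.sqrt (p i)) * W *
            Matrix.diagonal (fun i => (Real.sqrt (p i))⁻¹) * D
         A + Aᵀ)) := by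
  set s : Fin n → ℝ := fun i => Real.sqrt (p i) with hs_def
  have hs : ∀ i, 0 < s i := fun i => Real.sqrt_pos.mpr (hp i)
  set M : Matrix (Fin n) (Fin n) ℝ :=
    Matrix.diagonal s * W * Matrix.diagonal (fun i => (s i)⁻¹) with hM_def
  -- Key contraction estimate
  have keyA : ∀ x : Fin n → ℝ, x ≠ 0 → g * eNorm (M.mulVec x) < eNorm x := by
    intro x hx
    set z : Fin n → ℝ := fun i => (s i)⁻¹ * x i with hz_def
    have hxz : ∀ i, x i = s i * z i := by
      intro i
      show x i = s i * ((s i)⁻¹ * x i)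
      exact (mul_inv_cancel_left₀ (hs i).ne' (x i)).symm
    have hz : z ≠ 0 := by
      intro h0
      apply hx
      funext i
      have : z i = 0 := by rw [h0]; rfl
      rw [Pi.zero_apply, hxz i, this, mul_zero]
    have hzx : (Matrix.diagonal fun i => (s i)⁻¹).mulVec x = z := by
      funext i
      rw [Matrix.mulVec_diagonal]
    set w : Fin n → ℝ := W.mulVec z with hw_def
    have hMx : M.mulVec x = fun i => s i * w i := by
      rw [hM_def, ← Matrix.mulVec_mulVec, hzx, ← Matrix.mulVec_mulVec]
      funext i
      rw [Matrix.mulVec_diagonal]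
    have hcz := hcond z hz
    rw [Matrix.sub_mulVec, dotProduct_sub, Matrix.smul_mulVec, dotProduct_smul,
      smul_eq_mul, sub_neg] at hcz
    have e1 : z ⬝ᵥ (Wᵀ * Matrix.diagonal p * W).mulVec z = ∑ i, p i * w i ^ 2 := by
      rw [← Matrix.mulVec_mulVec, ← Matrix.mulVec_mulVec, Matrix.dotProduct_mulVec,
        Matrix.vecMul_transpose, ← hw_def]
      simp only [dotProduct, Matrix.mulVec_diagonal]
      exact Finset.sum_congr rfl fun i _ => by ring
    have e2 : z ⬝ᵥ (Matrix.diagonal p).mulVec z = ∑ i, p i * z i ^ 2 := by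
      simp only [dotProduct, Matrix.mulVec_diagonal]
      exact Finset.sum_congr rfl fun i _ => by ring
    rw [e1, e2] at hcz
    have hsq : ∀ i, s i ^ 2 = p i := fun i => Real.sq_sqrt (hp i).le
    have hMxnorm : eNorm (M.mulVec x) = Real.sqrt (∑ i, p i * w i ^ 2) := by
      rw [hMx]; unfold eNorm
      congr 1
      exact Finset.sum_congr rfl fun i _ => by rw [mul_pow, hsq i]
    have hxnorm : eNorm x = Real.sqrt (∑ i, p i * z i ^ 2) := by
      unfold eNorm
      congr 1
      exact Finset.sum_congr rfl fun i _ => by rw [hxz i, mul_pow, hsq i]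
    rw [hMxnorm, hxnorm]
    have h1 : g * Real.sqrt (∑ i, p i * w i ^ 2) =
        Real.sqrt (g ^ 2 * ∑ i, p i * w i ^ 2) := by
      rw [Real.sqrt_mul (sq_nonneg g), Real.sqrt_sq hg.le]
    rw [h1]
    exact Real.sqrt_lt_sqrt (mul_nonneg (sq_nonneg g)
      (Finset.sum_nonneg fun i _ => mul_nonneg (hp i).le (sq_nonneg _))) hcz
  -- Uniform bound via compactness
  obtain ⟨c, hc0, hcg, hc⟩ : ∃ c : ℝ, 0 ≤ c ∧ c * g < 1 ∧
      ∀ x : Fin n → ℝ, eNorm (M.mulVec x) ≤ c * eNorm x := by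
    rcases Nat.eq_zero_or_pos n with hn | hn
    · refine ⟨0, le_refl 0, by norm_num, fun x => ?_⟩
      subst hn
      simp [eNorm]
    · set f : EuclideanSpace ℝ (Fin n) → ℝ := fun v => eNorm (M.mulVec v) with hf_def
      have hfc : Continuous f := by
        apply Real.continuous_sqrt.comp
        apply continuous_finset_sum
        intro i _
        have : Continuous fun v : EuclideanSpace ℝ (Fin n) => (M.mulVec v) i := by
          show Continuous fun v : EuclideanSpace ℝ (Fin n) => ∑ j, M i j * v j
          apply continuous_finset_sum
          intro j _
          exact continuous_const.mul (EuclideanSpace.proj j).continuous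
        exact this.pow 2
      have hne : (Metric.sphere (0 : EuclideanSpace ℝ (Fin n)) 1).Nonempty := by
        refine ⟨EuclideanSpace.single ⟨0, hn⟩ (1 : ℝ), ?_⟩
        rw [mem_sphere_zero_iff_norm, EuclideanSpace.norm_single]
        simp
      obtain ⟨v₀, hv₀S, hmax⟩ := (isCompact_sphere (0 : EuclideanSpace ℝ (Fin n)) 1)
        |>.exists_isMaxOn hne hfc.continuousOn
      have hv₀norm : eNorm (v₀ : Fin n → ℝ) = 1 := by
        rw [eNorm_eq_norm]
        exact mem_sphere_zero_iff_norm.mp hv₀S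
      have hv₀ne : (v₀ : Fin n → ℝ) ≠ 0 := by
        intro h
        rw [h, eNorm_zero] at hv₀norm
        norm_num at hv₀norm
      refine ⟨f v₀, eNorm_nonneg _, ?_, ?_⟩
      · have := keyA v₀ hv₀ne
        rw [hv₀norm] at this
        rw [mul_comm]
        exact this
      · intro x
        by_cases hx : x = 0
        · subst hx
          rw [Matrix.mulVec_zero, eNorm_zero, mul_zero]
        · have ht : 0 < eNorm x := eNorm_pos hx
          set u : EuclideanSpace ℝ (Fin n) := WithLp.toLp 2 ((eNorm x)⁻¹ • x) with hu_def
          have hunorm : eNorm (u : Fin n → ℝ) = 1 := by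
            rw [hu_def]
            show eNorm ((eNorm x)⁻¹ • x) = 1
            rw [eNorm_smul, abs_of_pos (inv_pos.mpr ht), inv_mul_cancel₀ ht.ne']
          have huS : u ∈ Metric.sphere (0 : EuclideanSpace ℝ (Fin n)) 1 := by
            rw [mem_sphere_zero_iff_norm, ← eNorm_eq_norm]
            exact hunorm
          have hxu : x = eNorm x • (u : Fin n → ℝ) := by
            rw [hu_def]
            show x = eNorm x • ((eNorm x)⁻¹ • x)
            rw [smul_inv_smul₀ ht.ne']
          have h1 : eNorm (M.mulVec x) = eNorm x * eNorm (M.mulVec u) := by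
            conv_lhs => rw [hxu]
            rw [Matrix.mulVec_smul, eNorm_smul, abs_of_pos ht]
          rw [h1, mul_comm (f v₀)]
          exact mul_le_mul_of_nonneg_left (hmax huS) ht.le
  constructor
  · exact ⟨c, (lt_div_iff₀ hg).mpr hcg, hc⟩
  · intro D hD hDg
    intro x hx
    dsimp only
    set A : Matrix (Fin n) (Fin n) ℝ := -1 + M * D with hA_def
    have hsym : x ⬝ᵥ ((1/2 : ℝ) • (A + Aᵀ)).mulVec x = x ⬝ᵥ A.mulVec x := by
      rw [Matrix.smul_mulVec, dotProduct_smul, Matrix.add_mulVec, dotProduct_add,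
        Matrix.mulVec_transpose, dotProduct_comm x (x ᵥ* A), ← Matrix.dotProduct_mulVec,
        smul_eq_mul]
      ring
    rw [hsym]
    set y : Fin n → ℝ := D.mulVec x with hy_def
    have hAx : x ⬝ᵥ A.mulVec x = -(x ⬝ᵥ x) + x ⬝ᵥ M.mulVec y := by
      rw [hA_def, Matrix.add_mulVec, dotProduct_add, Matrix.neg_mulVec, Matrix.one_mulVec,
        dotProduct_neg, ← Matrix.mulVec_mulVec]
    rw [hAx]
    have hxx : x ⬝ᵥ x = eNorm x ^ 2 := by
      rw [eNorm_sq]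
      exact Finset.sum_congr rfl fun i _ => by ring
    have hy_le : eNorm y ≤ g * eNorm x := by
      rw [hy_def, isDiag_mulVec hD]
      have h1 : eNorm (fun i => D i i * x i) = Real.sqrt (∑ i, (D i i * x i) ^ 2) := rfl
      have h2 : g * eNorm x = Real.sqrt (g ^ 2 * ∑ i, x i ^ 2) := by
        rw [Real.sqrt_mul (sq_nonneg g), Real.sqrt_sq hg.le]; rfl
      rw [h1, h2]
      apply Real.sqrt_le_sqrt
      rw [Finset.mul_sum]
      refine Finset.sum_le_sum fun i _ => ?_
      rw [mul_pow]
      have hD2 : D i i ^ 2 ≤ g ^ 2 := pow_le_pow_left₀ (hDg i).1 (hDg i).2 2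
      exact mul_le_mul_of_nonneg_right hD2 (sq_nonneg _)
    have hdot : x ⬝ᵥ M.mulVec y ≤ eNorm x * eNorm (M.mulVec y) := dot_le_eNorm _ _
    have hMy : eNorm (M.mulVec y) ≤ c * eNorm y := hc y
    have ht : 0 < eNorm x := eNorm_pos hx
    have hyn : 0 ≤ eNorm y := eNorm_nonneg y
    have h3 : x ⬝ᵥ M.mulVec y ≤ eNorm x * (c * (g * eNorm x)) :=
      calc x ⬝ᵥ M.mulVec y ≤ eNorm x * eNorm (M.mulVec y) := hdot
        _ ≤ eNorm x * (c * eNorm y) := mul_le_mul_of_nonneg_left hMy (eNorm_nonneg x)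
        _ ≤ eNorm x * (c * (g * eNorm x)) :=
            mul_le_mul_of_nonneg_left (mul_le_mul_of_nonneg_left hy_le hc0) (eNorm_nonneg x)
    have h4 : c * g * eNorm x ^ 2 < 1 * eNorm x ^ 2 :=
      mul_lt_mul_of_pos_right hcg (pow_pos ht 2)
    nlinarith [h3, h4, hxx]
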